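/- Let D = {(p_t, x_t^1,…,x_t^n) : t = 1,…,T} be a multi-agent dataset with p_t ∈ ℝ^m having strictly positive entries and x_t^i ∈ ℝ^m for each agent i ∈ {1,…,n}. Suppose V : (ℝ^m)^n → ℝ is concave and differentiable, each block gradient ∇_{x^i} V is strictly positive (every partial derivative strictly positive) at every point, and for each t the joint response (x_t^1,…,x_t^n) maximizes V over the joint budget set {(x^1,…,x^n) : p_tᵀ x^i ≤ p_tᵀ x_t^i for all i = 1,…,n}. Then, setting v_t := V(x_t^1,…,x_t^n), there exist scalars λ_t^i > 0 with ∇_{x^i} V(x_t^1,…,x_t^n) = λ_t^i p_t for all i and t, and the multi-agent Afriat inequalities v_τ − v_t − Σ_{i=1}^n λ_t^i p_tᵀ (x_τ^i − x_t^i) ≤ 0 hold for all t, τ ∈ {1,…,T}. -/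

import Mathlib

open Finset Filter Topology

lemma le_deriv_of_slope {g : ℝ → ℝ} {c a : ℝ} (h : HasDerivAt g c 0)
    (hb : ∀ s : ℝ, 0 < s → s < 1 → a ≤ (g s - g 0) / s) : a ≤ c := by
  have ht : Filter.Tendsto (slope g 0) (𝓝[>] 0) (𝓝 c) :=
    (hasDerivAt_iff_tendsto_slope.mp h).mono_left
      (nhdsWithin_mono _ (fun s hs => ne_of_gt hs))
  refine ge_of_tendsto ht ?_
  filter_upwards [Ioo_mem_nhdsGT_of_mem (by simp : (0:ℝ) ∈ Set.Ico 0 1)] with s hs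
  have := hb s hs.1 hs.2
  simpa [slope_def_field, div_eq_iff] using this

lemma deriv_le_of_slope {g : ℝ → ℝ} {c a : ℝ} (h : HasDerivAt g c 0)
    (hb : ∀ s : ℝ, 0 < s → s < 1 → (g s - g 0) / s ≤ a) : c ≤ a := by
  have key := le_deriv_of_slope (a := -a) (h.neg) (fun s hs hs1 => by
    have h2 := hb s hs hs1
    rw [div_le_iff₀ hs] at h2
    show -a ≤ (-g s - -g 0) / s
    rw [le_div_iff₀ hs]
    linarith)
  linarith [key]

lemma hasDerivAt_dir {E : Type*} [NormedAddCommGroup E] [NormedSpace ℝ E]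
    (V : E → ℝ) (hdiff : Differentiable ℝ V) (x d : E) :
    HasDerivAt (fun s : ℝ => V (x + s • d)) (fderiv ℝ V x d) 0 := by
  have h1 : HasDerivAt (fun s : ℝ => x + s • d) d 0 := by
    simpa using ((hasDerivAt_id (0:ℝ)).smul_const d).const_add x
  have h2 := (hdiff (x + (0:ℝ) • d)).hasFDerivAt
  have h3 := h2.comp_hasDerivAt 0 h1
  simpa [Function.comp_def] using h3

/-- Multiagent Afriat Theorem, implication (1) ⟹ (2): if the multi-agent dataset
`D = {(p_t, x_t^1, …, x_t^n)}` is generated by joint maximization of a concave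
differentiable potential `V` with strictly positive block gradients over the joint
budget sets `{(x^1,…,x^n) : p_tᵀ x^i ≤ p_tᵀ x_t^i for all i}`, then there exist
multipliers `λ_t^i > 0` with `∇_{x^i} V(x_t) = λ_t^i p_t`, and the multi-agent
Afriat inequalities
`V(x_τ) − V(x_t) − Σ_i λ_t^i p_tᵀ (x_τ^i − x_t^i) ≤ 0` hold for all `t, τ`. -/
theorem multiagent_afriat_nash_implies_inequalities
    (m n T : ℕ)
    (p : Fin T → Fin m → ℝ) (hp : ∀ t j, 0 < p t j)
    (x : Fin T → Fin n → Fin m → ℝ)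
    (V : (Fin n → Fin m → ℝ) → ℝ)
    (hconc : ConcaveOn ℝ Set.univ V)
    (hdiff : Differentiable ℝ V)
    (hgrad : ∀ (z : Fin n → Fin m → ℝ) (i : Fin n) (j : Fin m),
      0 < fderiv ℝ V z (Pi.single i (Pi.single j 1)))
    (hmax : ∀ t, ∀ y : Fin n → Fin m → ℝ,
      (∀ i, (∑ j, p t j * y i j) ≤ (∑ j, p t j * x t i j)) → V y ≤ V (x t)) :
    ∃ lam : Fin T → Fin n → ℝ,
      (∀ t i, 0 < lam t i) ∧
      (∀ t i j, fderiv ℝ V (x t) (Pi.single i (Pi.single j 1)) = lam t i * p t j) ∧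
      (∀ t τ,
        V (x τ) - V (x t) - ∑ i, lam t i * ∑ j, p t j * (x τ i j - x t i j) ≤ 0) := by
  classical
  -- derivative vanishes along budget-neutral directions
  have hkey : ∀ t (d : Fin n → Fin m → ℝ), (∀ i, ∑ j, p t j * d i j = 0) →
      fderiv ℝ V (x t) d ≤ 0 := by
    intro t d hd
    refine deriv_le_of_slope (hasDerivAt_dir V hdiff (x t) d) ?_
    intro s hs hs1
    have hfeas : V (x t + s • d) ≤ V (x t) := by
      refine hmax t _ (fun i => ?_)
      have hcalc : ∑ j, p t j * (x t i j + s * d i j)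
          = ∑ j, p t j * x t i j + s * ∑ j, p t j * d i j := by
        rw [Finset.mul_sum, ← Finset.sum_add_distrib]
        exact Finset.sum_congr rfl fun j _ => by ring
      simp only [Pi.add_apply, Pi.smul_apply, smul_eq_mul]
      rw [hcalc, hd i]
      simp
    show (V (x t + s • d) - V (x t + (0:ℝ) • d)) / s ≤ 0
    rw [zero_smul, add_zero]
    exact div_nonpos_iff.mpr (Or.inr ⟨by linarith, hs.le⟩)
  have hzero : ∀ t (d : Fin n → Fin m → ℝ), (∀ i, ∑ j, p t j * d i j = 0) →
      fderiv ℝ V (x t) d = 0 := by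
    intro t d hd
    have h1 := hkey t d hd
    have h2 := hkey t (-d) (fun i => by
      have := hd i
      simp only [Pi.neg_apply, mul_neg, Finset.sum_neg_distrib]
      linarith)
    rw [map_neg] at h2
    linarith
  -- subgradient inequality for concave V
  have hsub : ∀ t (y : Fin n → Fin m → ℝ),
      V y - V (x t) ≤ fderiv ℝ V (x t) (y - x t) := by
    intro t y
    refine le_deriv_of_slope (hasDerivAt_dir V hdiff (x t) (y - x t)) ?_
    intro s hs hs1
    show V y - V (x t) ≤ (V (x t + s • (y - x t)) - V (x t + (0:ℝ) • (y - x t))) / s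
    rw [zero_smul, add_zero, le_div_iff₀ hs]
    have hxy : x t + s • (y - x t) = (1 - s) • x t + s • y := by
      rw [smul_sub, sub_smul, one_smul]; abel
    have hc := hconc.2 (Set.mem_univ (x t)) (Set.mem_univ y)
      (by linarith : (0:ℝ) ≤ 1 - s) hs.le (by ring)
    rw [hxy]
    simp only [smul_eq_mul] at hc
    nlinarith [hc]
  -- sum computation for single directions
  have hsum : ∀ (q : Fin m → ℝ) (i i' : Fin n) (j : Fin m),
      ∑ k, q k * (Pi.single i (Pi.single j (1:ℝ)) : Fin n → Fin m → ℝ) i' k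
        = if i' = i then q j else 0 := by
    intro q i i' j
    rcases eq_or_ne i' i with h | h
    · subst h
      simp [Pi.single_apply, mul_ite, Finset.sum_ite_eq']
    · simp [Pi.single_eq_of_ne h, h]
  -- representation of arbitrary vectors
  have hrep : ∀ y : Fin n → Fin m → ℝ,
      y = ∑ i : Fin n, ∑ j : Fin m, y i j • (Pi.single i (Pi.single j (1:ℝ)) : Fin n → Fin m → ℝ) := by
    intro y; funext a b
    simp only [Finset.sum_apply, Pi.smul_apply, smul_eq_mul, Pi.single_apply, mul_ite,
      mul_one, mul_zero, apply_ite (fun g : Fin m → ℝ => g b)]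
    simp [Finset.sum_ite_eq, Finset.sum_ite_eq']
  have hlin : ∀ t (y : Fin n → Fin m → ℝ),
      fderiv ℝ V (x t) y
        = ∑ i, ∑ j, y i j * fderiv ℝ V (x t) (Pi.single i (Pi.single j 1)) := by
    intro t y
    conv_lhs => rw [hrep y]
    rw [map_sum]
    refine Finset.sum_congr rfl fun i _ => ?_
    rw [map_sum]
    refine Finset.sum_congr rfl fun j _ => ?_
    rw [map_smul]
    rfl
  -- proportionality of the gradient to prices
  have hP : ∀ t i (j : Fin m) (hm : 0 < m),
      fderiv ℝ V (x t) (Pi.single i (Pi.single j 1))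
        = fderiv ℝ V (x t) (Pi.single i (Pi.single (⟨0, hm⟩ : Fin m) 1)) / p t ⟨0, hm⟩
          * p t j := by
    intro t i j hm
    set j0 : Fin m := ⟨0, hm⟩
    set d : Fin n → Fin m → ℝ :=
      p t j0 • (Pi.single i (Pi.single j (1:ℝ)) : Fin n → Fin m → ℝ)
        - p t j • (Pi.single i (Pi.single j0 (1:ℝ)) : Fin n → Fin m → ℝ) with hd
    have hneutral : ∀ i', ∑ k, p t k * d i' k = 0 := by
      intro i'
      have : ∑ k, p t k * d i' k
          = p t j0 * (∑ k, p t k * (Pi.single i (Pi.single j (1:ℝ)) : Fin n → Fin m → ℝ) i' k)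
            - p t j * (∑ k, p t k * (Pi.single i (Pi.single j0 (1:ℝ)) : Fin n → Fin m → ℝ) i' k) := by
        rw [Finset.mul_sum, Finset.mul_sum, ← Finset.sum_sub_distrib]
        refine Finset.sum_congr rfl fun k _ => ?_
        simp only [hd, Pi.sub_apply, Pi.smul_apply, smul_eq_mul]
        ring
      rw [this, hsum, hsum]
      rcases eq_or_ne i' i with h | h <;> simp [h] <;> ring
    have h0 := hzero t d hneutral
    rw [hd, map_sub, map_smul, map_smul] at h0
    simp only [smul_eq_mul] at h0
    have hpj0 : p t j0 ≠ 0 := (hp t j0).ne'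
    field_simp
    linarith
  -- the multipliers
  refine ⟨fun t i => if h : 0 < m then
      fderiv ℝ V (x t) (Pi.single i (Pi.single (⟨0, h⟩ : Fin m) 1)) / p t ⟨0, h⟩
    else 1, ?_, ?_, ?_⟩
  · intro t i
    by_cases h : 0 < m
    · simp only [dif_pos h]
      exact div_pos (hgrad (x t) i ⟨0, h⟩) (hp t ⟨0, h⟩)
    · simp only [dif_neg h]; exact one_pos
  · intro t i j
    simp only [dif_pos j.pos]
    exact hP t i j j.pos
  · intro t τ
    have h1 := hsub t (x τ)
    rw [hlin t (x τ - x t)] at h1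
    have h2 : ∑ i, ∑ j, (x τ - x t) i j * fderiv ℝ V (x t) (Pi.single i (Pi.single j 1))
        = ∑ i, (if h : 0 < m then
            fderiv ℝ V (x t) (Pi.single i (Pi.single (⟨0, h⟩ : Fin m) 1)) / p t ⟨0, h⟩
          else 1) * ∑ j, p t j * (x τ i j - x t i j) := by
      refine Finset.sum_congr rfl fun i _ => ?_
      rw [Finset.mul_sum]
      refine Finset.sum_congr rfl fun j _ => ?_
      have hm : 0 < m := j.pos
      rw [dif_pos hm]
      rw [hP t i j hm]
      simp only [Pi.sub_apply]
      ring
    rw [h2] at h1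
    linarith
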